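/- arXiv:2206.01066 — 2 statements merged into one kernel-verified Lean document; each statement's English description precedes it below -/
import Mathlib

section
/- Let $\lambda = (\lambda_1, \dots, \lambda_l)$ be a strict partition (positive distinct integer parts) and define $E_\lambda := \frac{2^{|\lambda|}}{\lambda_1! \cdots \lambda_l!} \prod_{i<j} \frac{\lambda_i - \lambda_j}{\lambda_i + \lambda_j}$, where $|\lambda| = \sum_i \lambda_i$. Then $\frac{E_\lambda}{E_{2\lambda}} = \prod_{i=1}^{l} (2\lambda_i - 1)!!$, where $2\lambda = (2\lambda_1, \dots, 2\lambda_l)$. -/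
/-- The constant `E_λ = 2^{|λ|} / (λ_1! ⋯ λ_l!) ⬝ ∏_{i<j} (λ_i - λ_j)/(λ_i + λ_j)`. -/
def Econst {l : ℕ} (lam : Fin l → ℕ) : ℚ :=
  2 ^ (∑ i, lam i) / ∏ i, ((lam i).factorial : ℚ) *
    ∏ p ∈ Finset.univ.filter (fun p : Fin l × Fin l => p.1 < p.2),
      (((lam p.1 : ℚ) - lam p.2) / ((lam p.1 : ℚ) + lam p.2))

lemma double_fact (n : ℕ) : ((2 * n).factorial : ℚ)
    = 2 ^ n * n.factorial * ∏ j ∈ Finset.range n, (2 * (j : ℚ) + 1) := by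
  induction n with
  | zero => simp
  | succ n ih =>
    have h : 2 * (n + 1) = (2 * n + 1) + 1 := by ring
    rw [h, Nat.factorial_succ, Nat.factorial_succ, Nat.factorial_succ, Finset.prod_range_succ]
    push_cast [ih]
    ring

theorem E_ratio {l : ℕ} (lam : Fin l → ℕ) (hpos : ∀ i, 0 < lam i)
    (hstrict : ∀ i j : Fin l, i < j → lam j < lam i) :
    Econst lam / Econst (fun i => 2 * lam i)
      = ∏ i, ∏ j ∈ Finset.range (lam i), (2 * (j : ℚ) + 1) := by
  classical
  have hne : ∀ i j : Fin l, i ≠ j → (lam i : ℚ) ≠ lam j := by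
    intro i j hij
    rcases lt_or_gt_of_ne hij with h | h
    · exact_mod_cast (hstrict i j h).ne'
    · exact_mod_cast (hstrict j i h).ne
  set P : ℚ := ∏ p ∈ Finset.univ.filter (fun p : Fin l × Fin l => p.1 < p.2),
      (((lam p.1 : ℚ) - lam p.2) / ((lam p.1 : ℚ) + lam p.2)) with hPdef
  have hPne : P ≠ 0 := by
    rw [hPdef]
    apply Finset.prod_ne_zero_iff.mpr
    intro p hp
    simp only [Finset.mem_filter] at hp
    apply div_ne_zero
    · exact sub_ne_zero.mpr (hne _ _ (ne_of_lt hp.2))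
    · have : (0 : ℚ) < (lam p.1 : ℚ) + lam p.2 := by
        exact_mod_cast add_pos (hpos _) (hpos _)
      exact this.ne'
  have hP2 : (∏ p ∈ Finset.univ.filter (fun p : Fin l × Fin l => p.1 < p.2),
      (((2 * lam p.1 : ℕ) : ℚ) - (2 * lam p.2 : ℕ)) / (((2 * lam p.1 : ℕ) : ℚ) + (2 * lam p.2 : ℕ)))
      = P := by
    rw [hPdef]
    refine Finset.prod_congr rfl fun p _ => ?_
    push_cast
    rw [show (2 : ℚ) * lam p.1 - 2 * lam p.2 = 2 * ((lam p.1 : ℚ) - lam p.2) by ring,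
        show (2 : ℚ) * lam p.1 + 2 * lam p.2 = 2 * ((lam p.1 : ℚ) + lam p.2) by ring,
        mul_div_mul_left _ _ (two_ne_zero)]
  have hS2 : (∑ i, 2 * lam i) = 2 * ∑ i, lam i := by rw [Finset.mul_sum]
  have hF2 : (∏ i, ((2 * lam i).factorial : ℚ))
      = 2 ^ (∑ i, lam i) * (∏ i, ((lam i).factorial : ℚ)) *
        ∏ i, ∏ j ∈ Finset.range (lam i), (2 * (j : ℚ) + 1) := by
    rw [← Finset.prod_pow_eq_pow_sum, ← Finset.prod_mul_distrib, ← Finset.prod_mul_distrib]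
    exact Finset.prod_congr rfl fun i _ => double_fact (lam i)
  have hFne : (∏ i, ((lam i).factorial : ℚ)) ≠ 0 :=
    Finset.prod_ne_zero_iff.mpr fun i _ => Nat.cast_ne_zero.mpr (Nat.factorial_ne_zero _)
  have hRne : (∏ i, ∏ j ∈ Finset.range (lam i), (2 * (j : ℚ) + 1)) ≠ 0 := by
    apply Finset.prod_ne_zero_iff.mpr
    intro i _
    apply Finset.prod_ne_zero_iff.mpr
    intro j _
    positivity
  have h2ne : (2 : ℚ) ^ (∑ i, lam i) ≠ 0 := by positivity
  have hPl : P ^ l ≠ 0 := pow_ne_zero _ hPne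
  simp only [Econst, Finset.prod_mul_distrib, Finset.prod_const, Finset.card_univ,
    Fintype.card_fin, hP2, hS2, hF2, ← hPdef]
  field_simp
  ring
end

section
/- Define $A_{(a,b)}$ for non-negative integers $a, b$ by: $A_{(3k_1, 3k_2)} = (\tfrac{2}{3})^{k_1+k_2} \frac{1}{k_1! k_2!} \cdot \frac{k_1 - k_2}{k_1 + k_2}$ for $(k_1,k_2) \neq (0,0)$, $A_{(3m+1, 3n+2)} = (\tfrac{2}{3})^{m+n+1} \frac{2}{m! n! (m+n+1)}$, $A_{(3m+2,3n+1)} = -A_{(3n+1,3m+2)}$, and $A_{(a,b)} = 0$ whenever $a + b \not\equiv 0 \pmod 3$. Further define $D A_{(a,b)} := \frac{A_{(a-2,b)}}{a-1} + \frac{A_{(a,b-2)}}{b-1}$ (with terms involving negative entries interpreted via $A_{(a,b)}=0$ if $a<0$ or $b<0$, and defined only when $a,b \neq 1$). Then for all non-negative integers $m, n$, $D A_{(2(3m+2),\, 2(3n+2))} = 0$. -/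
/-- The constants `A_{(a,b)} = Q_{(a,b)}(0, 1/3, 0, …)`, given by the explicit formulas:
`A_{(3k₁,3k₂)} = (2/3)^{k₁+k₂} (1/(k₁! k₂!)) (k₁-k₂)/(k₁+k₂)`,
`A_{(3m+1,3n+2)} = (2/3)^{m+n+1} ⬝ 2/(m! n! (m+n+1))`,
`A_{(3m+2,3n+1)} = -A_{(3n+1,3m+2)}`, and `A_{(a,b)} = 0` when `3 ∤ a+b`. -/
def Apair (a b : ℕ) : ℚ :=
  if (a + b) % 3 ≠ 0 then 0
  else if a % 3 = 0 then
    (2 / 3 : ℚ) ^ (a / 3 + b / 3) * (1 / (((a / 3).factorial : ℚ) * ((b / 3).factorial : ℚ))) *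
      ((((a / 3 : ℕ) : ℚ) - ((b / 3 : ℕ) : ℚ)) / (((a / 3 : ℕ) : ℚ) + ((b / 3 : ℕ) : ℚ)))
  else if a % 3 = 1 then
    (2 / 3 : ℚ) ^ (a / 3 + b / 3 + 1) *
      (2 / (((a / 3).factorial : ℚ) * ((b / 3).factorial : ℚ) * ((a / 3 + b / 3 + 1 : ℕ) : ℚ)))
  else
    -((2 / 3 : ℚ) ^ (b / 3 + a / 3 + 1) *
      (2 / (((b / 3).factorial : ℚ) * ((a / 3).factorial : ℚ) * ((b / 3 + a / 3 + 1 : ℕ) : ℚ))))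

/-- `A` extended by zero to negative integer entries. -/
def Apair' (a b : ℤ) : ℚ := if a < 0 ∨ b < 0 then 0 else Apair a.toNat b.toNat

/-- The operator `D` on length-two `A`'s: `D A_{(a,b)} = A_{(a-2,b)}/(a-1) + A_{(a,b-2)}/(b-1)`. -/
def DApair (a b : ℤ) : ℚ := Apair' (a - 2) b / ((a : ℚ) - 1) + Apair' a (b - 2) / ((b : ℚ) - 1)

theorem DA_vanishes (m n : ℕ) :
    DApair (2 * (3 * (m : ℤ) + 2)) (2 * (3 * (n : ℤ) + 2)) = 0 := by
  have h1 : (2 * (3 * (m : ℤ) + 2) - 2).toNat = 6 * m + 2 := by omega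
  have h2 : (2 * (3 * (n : ℤ) + 2)).toNat = 6 * n + 4 := by omega
  have h3 : (2 * (3 * (m : ℤ) + 2)).toNat = 6 * m + 4 := by omega
  have h4 : (2 * (3 * (n : ℤ) + 2) - 2).toNat = 6 * n + 2 := by omega
  have hneg1 : ¬(2 * (3 * (m : ℤ) + 2) - 2 < 0 ∨ 2 * (3 * (n : ℤ) + 2) < 0) := by omega
  have hneg2 : ¬(2 * (3 * (m : ℤ) + 2) < 0 ∨ 2 * (3 * (n : ℤ) + 2) - 2 < 0) := by omega
  rw [DApair, Apair', Apair', if_neg hneg1, if_neg hneg2, h1, h2, h3, h4, Apair, Apair]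
  have e1 : ¬((6 * m + 2 + (6 * n + 4)) % 3 ≠ 0) := by omega
  have e2 : ¬((6 * m + 2) % 3 = 0) := by omega
  have e3 : ¬((6 * m + 2) % 3 = 1) := by omega
  have e4 : ¬((6 * m + 4 + (6 * n + 2)) % 3 ≠ 0) := by omega
  have e5 : ¬((6 * m + 4) % 3 = 0) := by omega
  have e6 : (6 * m + 4) % 3 = 1 := by omega
  rw [if_neg e1, if_neg e2, if_neg e3, if_neg e4, if_neg e5, if_pos e6]
  have d1 : (6 * m + 2) / 3 = 2 * m := by omega
  have d2 : (6 * n + 4) / 3 = 2 * n + 1 := by omega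
  have d3 : (6 * m + 4) / 3 = 2 * m + 1 := by omega
  have d4 : (6 * n + 2) / 3 = 2 * n := by omega
  rw [d1, d2, d3, d4]
  have f1 : ((2 * m + 1).factorial : ℚ) = (2 * m + 1) * ((2 * m).factorial : ℚ) := by
    rw [Nat.factorial_succ]; push_cast; ring
  have f2 : ((2 * n + 1).factorial : ℚ) = (2 * n + 1) * ((2 * n).factorial : ℚ) := by
    rw [Nat.factorial_succ]; push_cast; ring
  have nz1 : ((2 * m).factorial : ℚ) ≠ 0 := Nat.cast_ne_zero.mpr (Nat.factorial_ne_zero _)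
  have nz2 : ((2 * n).factorial : ℚ) ≠ 0 := Nat.cast_ne_zero.mpr (Nat.factorial_ne_zero _)
  have nz3 : ((2 * m : ℚ) + 1) ≠ 0 := by positivity
  have nz4 : ((2 * n : ℚ) + 1) ≠ 0 := by positivity
  have nz5 : (2 * (m : ℚ) * (3 : ℚ) + 2 * 2 - 1) ≠ 0 := by
    have : (0:ℚ) ≤ (m:ℚ) := Nat.cast_nonneg m; intro h; linarith
  have nz6 : (2 * (n : ℚ) * (3 : ℚ) + 2 * 2 - 1) ≠ 0 := by
    have : (0:ℚ) ≤ (n:ℚ) := Nat.cast_nonneg n; intro h; linarith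
  have nz7 : ((2 * n + 1 + (2 * m + 1) + 1 : ℕ) : ℚ) ≠ 0 := by positivity
  have nz8 : ((2 * m + 1 + 2 * n + 1 : ℕ) : ℚ) ≠ 0 := by positivity
  push_cast [f1, f2]
  have nz9 : (2 * (3 * (m : ℚ) + 2) - 1) ≠ 0 := by
    have : (0:ℚ) ≤ (m:ℚ) := Nat.cast_nonneg m; intro h; linarith
  have nz10 : (2 * (3 * (n : ℚ) + 2) - 1) ≠ 0 := by
    have : (0:ℚ) ≤ (n:ℚ) := Nat.cast_nonneg n; intro h; linarith
  field_simp
  ring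
end
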